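/- Each of the four functions ω_k(t) = (1/Γ(k)) Σ_{l≥0} ([k/5]_l)^5 t^{k+5l} / [k]_{5l}, for k = 1,2,3,4, is a formal power series solution of the Picard–Fuchs equation [D_t^4 − 5^5 t^{−5} Π_{m=1}^4 (D_t − m z)] ω = 0, where D_t = z t d/dt and [a]_n denotes the Pochhammer symbol a(a+1)···(a+n−1). -/

import Mathlib

open scoped Classical


lemma keyq (k l : ℕ) (hk : 1 ≤ k) :
    ((k:ℚ) + 5*l)^4 *
      ((∏ i ∈ Finset.range l, ((k:ℚ)/5 + i))^5 /
        ((Nat.factorial (k-1) : ℚ) * ∏ i ∈ Finset.range (5*l), ((k:ℚ) + i)))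
    = 5^5 * ((((k:ℚ)+5*l+5) - 4)*(((k:ℚ)+5*l+5) - 3)*(((k:ℚ)+5*l+5) - 2)*(((k:ℚ)+5*l+5) - 1)) *
      ((∏ i ∈ Finset.range (l+1), ((k:ℚ)/5 + i))^5 /
        ((Nat.factorial (k-1) : ℚ) * ∏ i ∈ Finset.range (5*l+5), ((k:ℚ) + i))) := by
  have hpos : ∀ m : ℕ, (0:ℚ) < ∏ i ∈ Finset.range m, ((k:ℚ) + i) := by
    intro m
    refine Finset.prod_pos fun i _ => ?_
    have h1 : (1:ℚ) ≤ k := by exact_mod_cast hk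
    have h2 : (0:ℚ) ≤ i := Nat.cast_nonneg i
    linarith
  have hF : (Nat.factorial (k-1) : ℚ) ≠ 0 := by positivity
  rw [Finset.prod_range_succ, Finset.prod_range_add]
  have e5 : ∏ i ∈ Finset.range 5, ((k:ℚ) + ↑(5*l+i)) =
      ((k:ℚ)+(5*l+0))*((k:ℚ)+(5*l+1))*((k:ℚ)+(5*l+2))*((k:ℚ)+(5*l+3))*((k:ℚ)+(5*l+4)) := by
    rw [show (5:ℕ) = 4+1 from rfl, Finset.prod_range_succ, Finset.prod_range_succ,
      Finset.prod_range_succ, Finset.prod_range_succ, Finset.prod_range_succ,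
      Finset.prod_range_zero]
    push_cast
    ring
  rw [e5]
  have h0 : (∏ i ∈ Finset.range (5*l), ((k:ℚ) + i)) ≠ 0 := (hpos (5*l)).ne'
  have h1 : (1:ℚ) ≤ k := by exact_mod_cast hk
  have h2 : (0:ℚ) ≤ (l:ℚ) := Nat.cast_nonneg l
  have hK0 : (k:ℚ) + (5*↑l+0) ≠ 0 := by nlinarith
  have hK1 : (k:ℚ) + (5*↑l+1) ≠ 0 := by nlinarith
  have hK2 : (k:ℚ) + (5*↑l+2) ≠ 0 := by nlinarith
  have hK3 : (k:ℚ) + (5*↑l+3) ≠ 0 := by nlinarith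
  have hK4 : (k:ℚ) + (5*↑l+4) ≠ 0 := by nlinarith
  field_simp
  ring

/-- The operator `D_t = z t d/dt`, acting on formal power series in `t` with coefficients
in `ℚ[z]` by `D_t (t^n) = z n t^n`. -/
noncomputable def Dop (f : PowerSeries (Polynomial ℚ)) : PowerSeries (Polynomial ℚ) :=
  PowerSeries.mk fun n => (n : Polynomial ℚ) * Polynomial.X * PowerSeries.coeff (R := Polynomial ℚ) n f

/-- The operator `D_t − m z`. -/
noncomputable def pfFactor (m : ℕ) (f : PowerSeries (Polynomial ℚ)) :
    PowerSeries (Polynomial ℚ) :=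
  Dop f - PowerSeries.C (R := Polynomial ℚ) (Polynomial.C (m : ℚ) * Polynomial.X) * f

/-- The series `ω_k(t) = (1/Γ(k)) ∑_{l≥0} ([k/5]_l)^5 t^{k+5l} / [k]_{5l}`, where
`[a]_n = a(a+1)⋯(a+n−1)` is the Pochhammer symbol and `Γ(k) = (k−1)!`. -/
noncomputable def omegaPF (k : ℕ) : PowerSeries (Polynomial ℚ) :=
  PowerSeries.mk fun n =>
    if k ≤ n ∧ (n - k) % 5 = 0 then
      Polynomial.C
        ((∏ i ∈ Finset.range ((n - k) / 5), ((k : ℚ) / 5 + (i : ℚ))) ^ 5 /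
          ((Nat.factorial (k - 1) : ℚ) * ∏ i ∈ Finset.range (n - k), ((k : ℚ) + (i : ℚ))))
    else 0

/-- Each of the four functions `ω_k`, `k = 1,2,3,4`, is a formal power series solution of
the Picard–Fuchs equation `[D_t^4 − 5^5 t^{−5} ∏_{m=1}^4 (D_t − m z)] ω = 0`, i.e.
(clearing `t^{−5}`): `t^5 D_t^4 ω_k = 5^5 (D_t − z)(D_t − 2z)(D_t − 3z)(D_t − 4z) ω_k`. -/
theorem stmt18 (k : ℕ) (hk1 : 1 ≤ k) (hk4 : k ≤ 4) :
    PowerSeries.X ^ 5 * Dop (Dop (Dop (Dop (omegaPF k)))) =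
      PowerSeries.C (R := Polynomial ℚ) (5 ^ 5 : Polynomial ℚ) *
        pfFactor 1 (pfFactor 2 (pfFactor 3 (pfFactor 4 (omegaPF k)))) := by
  refine PowerSeries.ext fun n => ?_
  rw [mul_comm, PowerSeries.coeff_mul_X_pow']
  simp only [Dop, pfFactor, omegaPF, PowerSeries.coeff_mk, map_sub, PowerSeries.coeff_C_mul]
  by_cases h : k ≤ n ∧ (n - k) % 5 = 0
  · by_cases h5 : k + 5 ≤ n
    · obtain ⟨l, rfl⟩ : ∃ l, n = k + 5*l + 5 := ⟨(n-k)/5 - 1, by omega⟩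
      rw [if_pos (by omega : (5:ℕ) ≤ k+5*l+5)]
      simp only [if_pos h, if_pos (show k ≤ k+5*l+5-5 ∧ (k+5*l+5-5-k)%5 = 0 by omega)]
      rw [show (k+5*l+5-5-k)/5 = l from by omega, show k+5*l+5-5-k = 5*l from by omega,
        show (k+5*l+5-k)/5 = l+1 from by omega, show k+5*l+5-k = 5*l+5 from by omega,
        show k+5*l+5-5 = k+5*l from by omega]
      have hC := congrArg Polynomial.C (keyq k l hk1)
      simp only [map_mul, map_pow, map_add, map_sub, map_ofNat, Polynomial.C_eq_natCast,
        map_one] at hC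
      simp only [Polynomial.C_eq_natCast]
      push_cast at hC ⊢
      linear_combination Polynomial.X ^ 4 * hC
    · have hnk : n = k := by omega
      subst hnk
      rw [if_neg (by omega : ¬ (5:ℕ) ≤ n)]
      simp only [if_pos h]
      interval_cases n <;>
        (simp only [Polynomial.C_eq_natCast]; push_cast; ring)
  · by_cases h5 : (5:ℕ) ≤ n
    · rw [if_pos h5, if_neg (show ¬(k ≤ n-5 ∧ (n-5-k)%5 = 0) by omega)]
      simp only [if_neg h]
      ring
    · rw [if_neg h5]
      simp only [if_neg h]
      ring
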